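/- (Baire Theorem for PM spaces) Let (S, 𝓕, τ) be a complete probabilistic metric space under a continuous triangle function τ. If {G_n} is a sequence of subsets of S, each dense and open in the strong topology, then ⋂_{n=1}^∞ G_n is nonempty; in fact, ⋂_{n=1}^∞ G_n is dense in S. -/
import Mathlib


open Set Filter Topology

/-- A distance distribution function: nondecreasing, left-continuous,
with values in `[0,1]`, and vanishing on `(-∞, 0]`. -/
def IsDDF (F : ℝ → ℝ) : Prop :=
  Monotone F ∧ (∀ x : ℝ, ContinuousWithinAt F (Set.Iio x) x) ∧
    (∀ x, 0 ≤ F x ∧ F x ≤ 1) ∧ ∀ x ≤ 0, F x = 0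

/-- The condition `(F, G; h)` in the definition of the modified Lévy distance. -/
def LevyCond (F G : ℝ → ℝ) (h : ℝ) : Prop :=
  ∀ x ∈ Set.Ioo (-(1 / h)) (1 / h), F (x - h) - h ≤ G x ∧ G x ≤ F (x + h) + h

/-- The modified Lévy distance on `Δ⁺`. -/
noncomputable def dL (F G : ℝ → ℝ) : ℝ :=
  sInf {h : ℝ | h ∈ Set.Ioc (0 : ℝ) 1 ∧ LevyCond F G h ∧ LevyCond G F h}

/-- The distribution function `H₀`, equal to `0` on `(-∞, 0]` and `1` on `(0, ∞)`. -/
noncomputable def H0 : ℝ → ℝ := fun x => if x ≤ 0 then 0 else 1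

/-- A triangle function: a binary operation on `Δ⁺` that is commutative, associative,
nondecreasing in each argument, and has `H₀` as identity. -/
def IsTriangleFunction (τ : (ℝ → ℝ) → (ℝ → ℝ) → (ℝ → ℝ)) : Prop :=
  (∀ F G, IsDDF F → IsDDF G → IsDDF (τ F G)) ∧
  (∀ F G, IsDDF F → IsDDF G → τ F G = τ G F) ∧
  (∀ F G K, IsDDF F → IsDDF G → IsDDF K → τ (τ F G) K = τ F (τ G K)) ∧
  (∀ F G K, IsDDF F → IsDDF G → IsDDF K → F ≤ G → τ F K ≤ τ G K) ∧
  (∀ F, IsDDF F → τ H0 F = F)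

/-- Continuity of a triangle function with respect to the modified Lévy metric on `Δ⁺`
(sequential continuity, which is equivalent since `d_L` is a metric). -/
def ContinuousTF (τ : (ℝ → ℝ) → (ℝ → ℝ) → (ℝ → ℝ)) : Prop :=
  ∀ (F G : ℕ → ℝ → ℝ) (F₀ G₀ : ℝ → ℝ),
    (∀ n, IsDDF (F n)) → (∀ n, IsDDF (G n)) → IsDDF F₀ → IsDDF G₀ →
    Filter.Tendsto (fun n => dL (F n) F₀) Filter.atTop (nhds 0) →
    Filter.Tendsto (fun n => dL (G n) G₀) Filter.atTop (nhds 0) →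
    Filter.Tendsto (fun n => dL (τ (F n) (G n)) (τ F₀ G₀)) Filter.atTop (nhds 0)

/-- `(S, 𝓕, τ)` is a probabilistic metric space. -/
structure IsPMSpace {S : Type*} (𝓕 : S → S → ℝ → ℝ)
    (τ : (ℝ → ℝ) → (ℝ → ℝ) → (ℝ → ℝ)) : Prop where
  ddf : ∀ p q, IsDDF (𝓕 p q)
  tf : IsTriangleFunction τ
  refl : ∀ p, 𝓕 p p = H0
  ne : ∀ p q, p ≠ q → 𝓕 p q ≠ H0
  symm : ∀ p q, 𝓕 p q = 𝓕 q p
  tri : ∀ p q r, τ (𝓕 p q) (𝓕 q r) ≤ 𝓕 p r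

/-- The strong neighborhood `N_p(t) = {q : F_{p,q}(t) > 1 - t}`. -/
def Npt {S : Type*} (𝓕 : S → S → ℝ → ℝ) (p : S) (t : ℝ) : Set S :=
  {q | 1 - t < 𝓕 p q t}

/-- A set is open in the strong topology iff it contains a strong neighborhood
of each of its points. -/
def StrongOpen {S : Type*} (𝓕 : S → S → ℝ → ℝ) (U : Set S) : Prop :=
  ∀ p ∈ U, ∃ t > 0, Npt 𝓕 p t ⊆ U

/-- A set is dense in the strong topology iff it meets every nonempty strongly open set. -/
def StrongDense {S : Type*} (𝓕 : S → S → ℝ → ℝ) (A : Set S) : Prop :=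
  ∀ U, StrongOpen 𝓕 U → U.Nonempty → (U ∩ A).Nonempty

/-- Convergence of a sequence in a PM space (the `(ε, λ)`-sense). -/
def PMConv {S : Type*} (𝓕 : S → S → ℝ → ℝ) (p : ℕ → S) (p₀ : S) : Prop :=
  ∀ ε > (0 : ℝ), ∀ lam ∈ Set.Ioo (0 : ℝ) 1, ∃ n₀ : ℕ, ∀ n ≥ n₀, 1 - lam < 𝓕 (p n) p₀ ε

/-- Cauchy sequences in a PM space. -/
def PMCauchy {S : Type*} (𝓕 : S → S → ℝ → ℝ) (p : ℕ → S) : Prop :=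
  ∀ ε > (0 : ℝ), ∀ lam ∈ Set.Ioo (0 : ℝ) 1, ∃ n₀ : ℕ, ∀ n ≥ n₀, ∀ m ≥ n₀,
    1 - lam < 𝓕 (p n) (p m) ε

/-- A PM space is complete if every Cauchy sequence converges. -/
def PMComplete {S : Type*} (𝓕 : S → S → ℝ → ℝ) : Prop :=
  ∀ p : ℕ → S, PMCauchy 𝓕 p → ∃ p₀, PMConv 𝓕 p p₀

section AuxLemmas

lemma H0_nonneg (x : ℝ) : 0 ≤ H0 x := by unfold H0; split_ifs <;> norm_num

lemma H0_le_one (x : ℝ) : H0 x ≤ 1 := by unfold H0; split_ifs <;> norm_num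

lemma H0_of_pos {x : ℝ} (hx : 0 < x) : H0 x = 1 := by
  simp [H0, not_le.mpr hx]

lemma H0_ddf : IsDDF H0 := by
  refine ⟨?_, ?_, fun x => ⟨H0_nonneg x, H0_le_one x⟩, fun x hx => by simp [H0, hx]⟩
  · intro x y hxy
    unfold H0
    by_cases hy : y ≤ 0
    · simp [hxy.trans hy, hy]
    · by_cases hx : x ≤ 0 <;> simp [hx, hy]
  · intro x
    rcases le_or_gt x 0 with hx | hx
    · apply (continuousWithinAt_const (b := (0:ℝ))).congr
      · intro y hy
        simp [H0, le_of_lt (lt_of_lt_of_le hy hx)]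
      · simp [H0, hx]
    · apply (continuousWithinAt_const (b := (1:ℝ))).congr_of_eventuallyEq
      · filter_upwards [((eventually_gt_nhds hx).filter_mono nhdsWithin_le_nhds)] with y hy
        simp [H0, not_le.mpr hy]
      · simp [H0, not_le.mpr hx]

lemma one_mem_levy {F G : ℝ → ℝ} (hF : IsDDF F) (hG : IsDDF G) :
    (1:ℝ) ∈ {h : ℝ | h ∈ Set.Ioc (0 : ℝ) 1 ∧ LevyCond F G h ∧ LevyCond G F h} := by
  have bF := hF.2.2.1
  have bG := hG.2.2.1
  refine ⟨⟨one_pos, le_refl 1⟩, ?_, ?_⟩ <;>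
  · intro x _
    constructor
    · nlinarith [(bF (x-1)).2, (bG x).1, (bG (x-1)).2, (bF x).1]
    · nlinarith [(bF (x+1)).1, (bG x).2, (bG (x+1)).1, (bF x).2]

lemma levy_bddBelow (F G : ℝ → ℝ) :
    BddBelow {h : ℝ | h ∈ Set.Ioc (0 : ℝ) 1 ∧ LevyCond F G h ∧ LevyCond G F h} :=
  ⟨0, fun h hh => hh.1.1.le⟩

lemma dL_nonneg (F G : ℝ → ℝ) : 0 ≤ dL F G :=
  Real.sInf_nonneg (fun h hh => hh.1.1.le)

lemma dL_self {F : ℝ → ℝ} (hF : Monotone F) : dL F F = 0 := by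
  refine le_antisymm (le_of_forall_pos_le_add fun ε hε => ?_) (dL_nonneg F F)
  have hmem : min ε 1 ∈ {h : ℝ | h ∈ Set.Ioc (0 : ℝ) 1 ∧ LevyCond F F h ∧ LevyCond F F h} := by
    have hpos : 0 < min ε 1 := lt_min hε one_pos
    refine ⟨⟨hpos, min_le_right _ _⟩, ?_, ?_⟩ <;>
    · intro x _
      constructor
      · have := hF (show x - min ε 1 ≤ x by linarith)
        linarith
      · have := hF (show x ≤ x + min ε 1 by linarith)
        linarith
  calc dL F F ≤ min ε 1 := csInf_le (levy_bddBelow F F) hmem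
    _ ≤ 0 + ε := by simp [min_le_left ε 1]

end AuxLemmas
section AuxLemmas2

lemma dL_H0_lt {F : ℝ → ℝ} (hF : IsDDF F) {δ : ℝ} (hδ : 0 < δ) (hδ1 : δ ≤ 1)
    (hval : 1 - δ < F δ) : dL F H0 < δ := by
  have cont := hF.2.1 δ
  have hev1 : ∀ᶠ y in 𝓝[<] δ, 1 - δ < F y := cont.eventually_const_lt hval
  have hev2 : ∀ᶠ y in 𝓝[<] δ, 0 < y :=
    (eventually_gt_nhds hδ).filter_mono nhdsWithin_le_nhds
  have hev3 : ∀ᶠ y in 𝓝[<] δ, y < δ := eventually_mem_nhdsWithin.mono (fun y hy => hy)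
  obtain ⟨a, ha1, ha2, ha3⟩ := (hev1.and (hev2.and hev3)).exists
  set h : ℝ := (max a (1 - F a) + δ) / 2 with hh
  have hmax1 : a ≤ max a (1 - F a) := le_max_left _ _
  have hmax2 : 1 - F a ≤ max a (1 - F a) := le_max_right _ _
  have hmaxδ : max a (1 - F a) < δ := max_lt ha3 (by linarith)
  have hah : a < h := by rw [hh]; linarith
  have hpos : 0 < h := lt_trans ha2 hah
  have hhδ : h < δ := by rw [hh]; linarith
  have hFa : 1 - h < F a := by rw [hh]; linarith
  have hmem : h ∈ {x : ℝ | x ∈ Set.Ioc (0 : ℝ) 1 ∧ LevyCond F H0 x ∧ LevyCond H0 F x} := by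
    refine ⟨⟨hpos, le_of_lt (lt_of_lt_of_le hhδ hδ1)⟩, ?_, ?_⟩
    · intro x _
      constructor
      · rcases le_or_gt x 0 with hx | hx
        · rw [hF.2.2.2 (x - h) (by linarith)]
          simp only [H0, if_pos hx]; linarith
        · rw [H0_of_pos hx]
          linarith [(hF.2.2.1 (x - h)).2]
      · rcases le_or_gt x 0 with hx | hx
        · simp only [H0, if_pos hx]
          linarith [(hF.2.2.1 (x + h)).1]
        · rw [H0_of_pos hx]
          have : F a ≤ F (x + h) := hF.1 (by linarith)
          linarith
    · intro x _
      constructor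
      · rcases le_or_gt (x - h) 0 with hx | hx
        · simp only [H0, if_pos hx]
          linarith [(hF.2.2.1 x).1]
        · rw [H0_of_pos hx]
          have : F a ≤ F x := hF.1 (by linarith)
          linarith
      · rcases le_or_gt (x + h) 0 with hx | hx
        · simp only [H0, if_pos hx]
          rw [hF.2.2.2 x (by linarith)]
          linarith
        · rw [H0_of_pos hx]
          linarith [(hF.2.2.1 x).2]
  calc dL F H0 ≤ h := csInf_le (levy_bddBelow F H0) hmem
    _ < δ := hhδ

end AuxLemmas2
section AuxLemmas3

lemma stable {F : ℝ → ℝ} (hF : IsDDF F) {t : ℝ} (ht : 0 < t) (hval : 1 - t < F t) :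
    ∃ h > 0, ∀ K : ℝ → ℝ, IsDDF K → dL K F < h → 1 - t < K t := by
  rcases le_or_gt t 1 with ht1 | ht1
  · -- find h ∈ (0,1) with F (t - h) - h > 1 - t
    have cont := hF.2.1 t
    have htd : Filter.Tendsto (fun h : ℝ => t - h) (𝓝[>] 0) (𝓝[<] t) := by
      apply tendsto_nhdsWithin_of_tendsto_nhds_of_eventually_within _
      · have : Filter.Tendsto (fun h : ℝ => t - h) (𝓝 0) (𝓝 (t - 0)) :=
          (tendsto_const_nhds.sub tendsto_id)
        simpa using this.mono_left nhdsWithin_le_nhds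
      · filter_upwards [self_mem_nhdsWithin] with y hy
        simp only [Set.mem_Iio]
        exact sub_lt_self t hy
    have h1 : Filter.Tendsto (fun h : ℝ => F (t - h) - h) (𝓝[>] 0) (𝓝 (F t - 0)) := by
      apply Filter.Tendsto.sub (cont.tendsto.comp htd)
      exact tendsto_id.mono_left nhdsWithin_le_nhds
    rw [sub_zero] at h1
    have hev1 : ∀ᶠ h in 𝓝[>] (0:ℝ), 1 - t < F (t - h) - h := h1.eventually_const_lt hval
    have hev2 : ∀ᶠ h in 𝓝[>] (0:ℝ), h < 1 :=
      (eventually_lt_nhds one_pos).filter_mono nhdsWithin_le_nhds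
    have hev3 : ∀ᶠ h in 𝓝[>] (0:ℝ), 0 < h := eventually_mem_nhdsWithin.mono (fun y hy => hy)
    obtain ⟨h, hh1, hh2, hh3⟩ := (hev1.and (hev2.and hev3)).exists
    refine ⟨h, hh3, ?_⟩
    intro K hK hdl
    obtain ⟨h', hmem', hh'⟩ := exists_lt_of_csInf_lt ⟨1, one_mem_levy hK hF⟩ hdl
    have hcond := hmem'.2.2  -- LevyCond F K h'
    have h'pos : 0 < h' := hmem'.1.1
    have hx : t ∈ Set.Ioo (-(1 / h')) (1 / h')  := by
      constructor
      · have : 0 < 1 / h' := by positivity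
        linarith
      · have : (1:ℝ) < 1 / h' := by
          rw [lt_div_iff₀ h'pos]; linarith
        linarith
    have := (hcond t hx).1  -- F (t - h') - h' ≤ K t
    have hmono : F (t - h) ≤ F (t - h') := hF.1 (by linarith)
    linarith
  · exact ⟨1, one_pos, fun K hK _ => lt_of_lt_of_le (by linarith) (hK.2.2.1 t).1⟩

lemma tendsto_dL_H0 {F : ℕ → ℝ → ℝ} (hF : ∀ n, IsDDF (F n)) {s : ℕ → ℝ}
    (hs0 : ∀ n, 0 < s n) (hs1 : ∀ n, s n ≤ 1) (hval : ∀ n, 1 - s n < F n (s n))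
    (hlim : Filter.Tendsto s Filter.atTop (nhds 0)) :
    Filter.Tendsto (fun n => dL (F n) H0) Filter.atTop (nhds 0) :=
  squeeze_zero (fun n => dL_nonneg _ _)
    (fun n => le_of_lt (dL_H0_lt (hF n) (hs0 n) (hs1 n) (hval n))) hlim

lemma tendsto_aux (c : ℝ) : Filter.Tendsto (fun n : ℕ => c / (n + 2)) Filter.atTop (nhds 0) :=
  Filter.Tendsto.div_atTop tendsto_const_nhds
    (Filter.tendsto_atTop_add_const_right _ 2 tendsto_natCast_atTop_atTop)

lemma two_step {τ : (ℝ → ℝ) → (ℝ → ℝ) → (ℝ → ℝ)} (hτtf : IsTriangleFunction τ)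
    (hτc : ContinuousTF τ) {t : ℝ} (ht : 0 < t) :
    ∃ σ, 0 < σ ∧ σ < t ∧ σ < 1 ∧ ∀ F G, IsDDF F → IsDDF G →
      1 - σ < F σ → 1 - σ < G σ → 1 - t < τ F G t := by
  by_contra hcon
  push_neg at hcon
  have hm : 0 < min t 1 := lt_min ht one_pos
  set s : ℕ → ℝ := fun n => min t 1 / (n + 2) with hsdef
  have hspos : ∀ n, 0 < s n := fun n => by positivity
  have hslt : ∀ n, s n < min t 1 := by
    intro n
    rw [hsdef]
    rw [div_lt_iff₀ (by positivity : (0:ℝ) < (n:ℝ) + 2)]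
    nlinarith [Nat.cast_nonneg (α := ℝ) n]
  have hs1 : ∀ n, s n ≤ 1 := fun n => le_of_lt (lt_of_lt_of_le (hslt n) (min_le_right _ _))
  have hst : ∀ n, s n < t := fun n => lt_of_lt_of_le (hslt n) (min_le_left _ _)
  have hs1' : ∀ n, s n < 1 := fun n => lt_of_lt_of_le (hslt n) (min_le_right _ _)
  choose F G hF hG hFs hGs hle using fun n => hcon (s n) (hspos n) (hst n) (hs1' n)
  have hslim : Filter.Tendsto s Filter.atTop (nhds 0) := tendsto_aux _
  have hF0 := tendsto_dL_H0 hF hspos hs1 hFs hslim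
  have hG0 := tendsto_dL_H0 hG hspos hs1 hGs hslim
  have hτlim := hτc F G H0 H0 hF hG H0_ddf H0_ddf hF0 hG0
  rw [hτtf.2.2.2.2 H0 H0_ddf] at hτlim
  obtain ⟨h, hpos, hstab⟩ := stable H0_ddf ht (by rw [H0_of_pos ht]; linarith)
  have hev := hτlim.eventually_lt_const hpos
  obtain ⟨n, hn⟩ := hev.exists
  exact absurd (hstab _ (hτtf.1 _ _ (hF n) (hG n)) hn) (not_lt.mpr (hle n))

lemma one_step {τ : (ℝ → ℝ) → (ℝ → ℝ) → (ℝ → ℝ)} (hτtf : IsTriangleFunction τ)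
    (hτc : ContinuousTF τ) {t : ℝ} (ht : 0 < t) {F : ℝ → ℝ} (hF : IsDDF F)
    (hval : 1 - t < F t) :
    ∃ s, 0 < s ∧ s < 1 ∧ ∀ G, IsDDF G → 1 - s < G s → 1 - t < τ F G t := by
  by_contra hcon
  push_neg at hcon
  set s : ℕ → ℝ := fun n => 1 / (n + 2) with hsdef
  have hspos : ∀ n, 0 < s n := fun n => by positivity
  have hs1' : ∀ n, s n < 1 := by
    intro n
    rw [hsdef]
    rw [div_lt_iff₀ (by positivity : (0:ℝ) < (n:ℝ) + 2)]
    nlinarith [Nat.cast_nonneg (α := ℝ) n]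
  have hs1 : ∀ n, s n ≤ 1 := fun n => le_of_lt (hs1' n)
  choose Gs hG hGs hle using fun n => hcon (s n) (hspos n) (hs1' n)
  have hslim : Filter.Tendsto s Filter.atTop (nhds 0) := tendsto_aux _
  have hG0 := tendsto_dL_H0 hG hspos hs1 hGs hslim
  have hFlim : Filter.Tendsto (fun _ : ℕ => dL F F) Filter.atTop (nhds 0) := by
    rw [dL_self hF.1]; exact tendsto_const_nhds
  have hτlim := hτc (fun _ => F) Gs F H0 (fun _ => hF) hG hF H0_ddf hFlim hG0
  rw [hτtf.2.1 F H0 hF H0_ddf, hτtf.2.2.2.2 F hF] at hτlim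
  obtain ⟨h, hpos, hstab⟩ := stable hF ht hval
  obtain ⟨n, hn⟩ := (hτlim.eventually_lt_const hpos).exists
  exact absurd (hstab _ (hτtf.1 _ _ hF (hG n)) hn) (not_lt.mpr (hle n))

end AuxLemmas3
section AuxPM

variable {S : Type*} {𝓕 : S → S → ℝ → ℝ} {τ : (ℝ → ℝ) → (ℝ → ℝ) → (ℝ → ℝ)}

lemma npt_self (hPM : IsPMSpace 𝓕 τ) (p : S) {t : ℝ} (ht : 0 < t) : p ∈ Npt 𝓕 p t := by
  show 1 - t < 𝓕 p p t
  rw [hPM.refl, H0_of_pos ht]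
  linarith

lemma npt_mono (hPM : IsPMSpace 𝓕 τ) (p : S) {t t' : ℝ} (htt' : t ≤ t') :
    Npt 𝓕 p t ⊆ Npt 𝓕 p t' := by
  intro q hq
  show 1 - t' < 𝓕 p q t'
  have h1 : 1 - t < 𝓕 p q t := hq
  have h2 : 𝓕 p q t ≤ 𝓕 p q t' := (hPM.ddf p q).1 htt'
  linarith

lemma npt_open (hPM : IsPMSpace 𝓕 τ) (hτc : ContinuousTF τ) (p : S) {t : ℝ} (ht : 0 < t) :
    StrongOpen 𝓕 (Npt 𝓕 p t) := by
  intro q hq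
  obtain ⟨s, hs0, _, hstep⟩ := one_step hPM.tf hτc ht (hPM.ddf p q) hq
  refine ⟨s, hs0, fun r hr => ?_⟩
  show 1 - t < 𝓕 p r t
  exact lt_of_lt_of_le (hstep _ (hPM.ddf q r) hr) (hPM.tri p q r t)

end AuxPM
/-- **Baire Theorem.** In a complete PM space with continuous triangle
function, the intersection of countably many dense strongly open sets is nonempty, and
in fact dense. -/
theorem baire_theorem {S : Type*} [Nonempty S]
    (𝓕 : S → S → ℝ → ℝ) (τ : (ℝ → ℝ) → (ℝ → ℝ) → (ℝ → ℝ))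
    (hPM : IsPMSpace 𝓕 τ) (hτ : ContinuousTF τ) (hcomp : PMComplete 𝓕)
    (G : ℕ → Set S) (hopen : ∀ n, StrongOpen 𝓕 (G n))
    (hdense : ∀ n, StrongDense 𝓕 (G n)) :
    (⋂ n, G n).Nonempty ∧ StrongDense 𝓕 (⋂ n, G n) := by
  have hsigex : ∀ t : ℝ, 0 < t → ∃ σ, 0 < σ ∧ σ < t ∧ σ < 1 ∧ ∀ F G, IsDDF F → IsDDF G →
      1 - σ < F σ → 1 - σ < G σ → 1 - t < τ F G t := fun t ht => two_step hPM.tf hτ ht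
  choose sig hsig1 hsig2 hsig3 hsig4 using hsigex
  have hDense : StrongDense 𝓕 (⋂ n, G n) := by
    rintro U hU ⟨p₀, hp₀⟩
    obtain ⟨t₀, ht₀, hsub₀⟩ := hU p₀ hp₀
    have hstep : ∀ (p : S) (t : ℝ) (ht : 0 < t) (n : ℕ) (b : ℝ), 0 < b →
        ∃ (q : S) (t' : ℝ), 0 < t' ∧ t' < 1 ∧ t' ≤ b ∧ Npt 𝓕 q t' ⊆ G n ∧
          Npt 𝓕 q t' ⊆ Npt 𝓕 p (sig t ht) := by
      intro p t ht n b hb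
      have h1 : 0 < sig t ht := hsig1 t ht
      have h2 : 0 < sig _ h1 := hsig1 _ h1
      obtain ⟨q, hqp, hqG⟩ :=
        hdense n (Npt 𝓕 p (sig _ h1)) (npt_open hPM hτ p h2) ⟨p, npt_self hPM p h2⟩
      obtain ⟨u, hu, huG⟩ := hopen n q hqG
      refine ⟨q, min (min u (sig _ h1)) b, lt_min (lt_min hu h2) hb, ?_,
        min_le_right _ _, ?_, ?_⟩
      · exact lt_of_le_of_lt (le_trans (min_le_left _ _) (min_le_right _ _)) (hsig3 _ h1)
      · exact (npt_mono hPM q (le_trans (min_le_left _ _) (min_le_left _ _))).trans huG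
      · intro r hr
        have hr' : r ∈ Npt 𝓕 q (sig _ h1) :=
          npt_mono hPM q (le_trans (min_le_left _ _) (min_le_right _ _)) hr
        show 1 - sig t ht < 𝓕 p r (sig t ht)
        exact lt_of_lt_of_le
          (hsig4 (sig t ht) h1 _ _ (hPM.ddf p q) (hPM.ddf q r) hqp hr')
          (hPM.tri p q r (sig t ht))
    choose Q T hTpos hTlt1 hTb hTG hTlink using hstep
    let step' : ℕ → {x : S × ℝ // 0 < x.2 ∧ x.2 < 1} → {x : S × ℝ // 0 < x.2 ∧ x.2 < 1} :=
      fun n c =>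
        ⟨(Q c.1.1 c.1.2 c.2.1 n ((1/2)^(n+1)) (by positivity),
          T c.1.1 c.1.2 c.2.1 n ((1/2)^(n+1)) (by positivity)),
         hTpos c.1.1 c.1.2 c.2.1 n ((1/2)^(n+1)) (by positivity),
         hTlt1 c.1.1 c.1.2 c.2.1 n ((1/2)^(n+1)) (by positivity)⟩
    let c₀ : {x : S × ℝ // 0 < x.2 ∧ x.2 < 1} :=
      ⟨(p₀, min t₀ (1/2)),
       lt_min ht₀ (by norm_num), lt_of_le_of_lt (min_le_right _ _) (by norm_num)⟩
    let f : ℕ → {x : S × ℝ // 0 < x.2 ∧ x.2 < 1} := fun n => Nat.rec c₀ step' n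
    let p_ : ℕ → S := fun n => (f n).1.1
    let t_ : ℕ → ℝ := fun n => (f n).1.2
    have htpos : ∀ n, 0 < t_ n := fun n => (f n).2.1
    have hbound : ∀ n, t_ n ≤ (1/2)^n := by
      intro n
      induction n with
      | zero =>
        show min t₀ (1/2) ≤ (1/2:ℝ)^0
        rw [pow_zero]
        exact le_trans (min_le_right _ _) (by norm_num)
      | succ n _ =>
        exact hTb (p_ n) (t_ n) ((f n).2.1) n ((1/2)^(n+1)) (by positivity)
    have hsub0 : Npt 𝓕 (p_ 0) (t_ 0) ⊆ U := by
      show Npt 𝓕 p₀ (min t₀ (1/2)) ⊆ U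
      exact (npt_mono hPM p₀ (min_le_left _ _)).trans hsub₀
    have hsubG : ∀ n, Npt 𝓕 (p_ (n+1)) (t_ (n+1)) ⊆ G n :=
      fun n => hTG (p_ n) (t_ n) ((f n).2.1) n ((1/2)^(n+1)) (by positivity)
    have hlink : ∀ n, Npt 𝓕 (p_ (n+1)) (t_ (n+1)) ⊆ Npt 𝓕 (p_ n) (sig (t_ n) (htpos n)) :=
      fun n => hTlink (p_ n) (t_ n) ((f n).2.1) n ((1/2)^(n+1)) (by positivity)
    have hnested : ∀ n, Npt 𝓕 (p_ (n+1)) (t_ (n+1)) ⊆ Npt 𝓕 (p_ n) (t_ n) :=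
      fun n => (hlink n).trans (npt_mono hPM _ (le_of_lt (hsig2 _ (htpos n))))
    have hmono : ∀ n m, n ≤ m → Npt 𝓕 (p_ m) (t_ m) ⊆ Npt 𝓕 (p_ n) (t_ n) := by
      intro n m hnm
      induction hnm with
      | refl => exact subset_rfl
      | @step m _ ih => exact (hnested m).trans ih
    have hmem : ∀ n m, n ≤ m → 1 - t_ n < 𝓕 (p_ n) (p_ m) (t_ n) :=
      fun n m h => hmono n m h (npt_self hPM _ (htpos m))
    have hmemsig : ∀ n m, n + 1 ≤ m →
        1 - sig (t_ n) (htpos n) < 𝓕 (p_ n) (p_ m) (sig (t_ n) (htpos n)) :=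
      fun n m h => hlink n (hmono (n+1) m h (npt_self hPM _ (htpos m)))
    have hC : PMCauchy 𝓕 (fun n => p_ n) := by
      intro ε hε lam hlam
      have hη : 0 < min ε lam := lt_min hε hlam.1
      obtain ⟨N, hN⟩ := exists_pow_lt_of_lt_one (hsig1 _ hη) (by norm_num : (1/2:ℝ) < 1)
      refine ⟨N, fun n hn m hm => ?_⟩
      have key : ∀ k, N ≤ k →
          1 - sig (min ε lam) hη < 𝓕 (p_ N) (p_ k) (sig (min ε lam) hη) := by
        intro k hk
        have h1 := hmem N k hk
        have h2 : t_ N ≤ sig (min ε lam) hη := le_trans (hbound N) (le_of_lt hN)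
        have h3 := (hPM.ddf (p_ N) (p_ k)).1 h2
        linarith
      have hkey1 : 1 - sig _ hη < 𝓕 (p_ n) (p_ N) (sig _ hη) := by
        rw [hPM.symm]; exact key n hn
      have h4 := hsig4 _ hη (𝓕 (p_ n) (p_ N)) (𝓕 (p_ N) (p_ m))
        (hPM.ddf _ _) (hPM.ddf _ _) hkey1 (key m hm)
      have htri := hPM.tri (p_ n) (p_ N) (p_ m) (min ε lam)
      have hmono' := (hPM.ddf (p_ n) (p_ m)).1 (min_le_left ε lam)
      have h6 : min ε lam ≤ lam := min_le_right _ _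
      show 1 - lam < 𝓕 (p_ n) (p_ m) ε
      linarith
    obtain ⟨pstar, hconv⟩ := hcomp _ hC
    have hin : ∀ n, pstar ∈ Npt 𝓕 (p_ n) (t_ n) := by
      intro n
      have hs0 := hsig1 _ (htpos n)
      have hs1 := hsig3 _ (htpos n)
      obtain ⟨m₀, hm₀⟩ := hconv (sig _ (htpos n)) hs0 (sig _ (htpos n)) ⟨hs0, hs1⟩
      have h1 : 1 - sig _ (htpos n) < 𝓕 (p_ n) (p_ (max (n+1) m₀)) (sig _ (htpos n)) :=
        hmemsig n (max (n+1) m₀) (le_max_left _ _)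
      have h2 : 1 - sig _ (htpos n) < 𝓕 (p_ (max (n+1) m₀)) pstar (sig _ (htpos n)) :=
        hm₀ (max (n+1) m₀) (le_max_right _ _)
      show 1 - t_ n < 𝓕 (p_ n) pstar (t_ n)
      exact lt_of_lt_of_le
        (hsig4 _ (htpos n) _ _ (hPM.ddf _ _) (hPM.ddf _ _) h1 h2)
        (hPM.tri (p_ n) (p_ (max (n+1) m₀)) pstar (t_ n))
    exact ⟨pstar, hsub0 (hin 0), Set.mem_iInter.mpr fun n => hsubG n (hin (n+1))⟩
  constructor
  · have huniv : StrongOpen 𝓕 (Set.univ : Set S) := fun p _ => ⟨1, one_pos, Set.subset_univ _⟩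
    obtain ⟨x, -, hx⟩ := hDense Set.univ huniv ⟨Classical.arbitrary S, trivial⟩
    exact ⟨x, hx⟩
  · exact hDense
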